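/- Let Ω be a measurable space, μ a probability measure on Ω, 𝒞 a concept class on Ω, and ε > 0. Suppose B₁,…,B_k are measurable subsets of Ω forming an ε/2-cover of 𝒞 in L¹(μ), i.e., for every C ∈ 𝒞 there is j with μ(C Δ B_j) ≤ ε/2. Let L be a minimal empirical risk rule over {B₁,…,B_k} with sample size m: on input a labeled sample ((x₁,l₁),…,(x_m,l_m)) ∈ (Ω × {0,1})^m, L outputs some B_j minimizing the empirical error |{i : χ_{B_j}(x_i) ≠ l_i}|. Then for every δ ∈ (0,1) and every natural number m ≥ (32/ε)·ln(k/δ), the rule L is PAC for 𝒞 under μ to accuracy ε with confidence 1 − δ. -/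

import Mathlib

open MeasureTheory Filter

/-- The `n`-fold product (i.i.d.) measure on `Fin n → Ω`. -/
noncomputable def prodMeas {Ω : Type*} [MeasurableSpace Ω] (μ : Measure Ω) (n : ℕ) :
    Measure (Fin n → Ω) := Measure.pi fun _ => μ

/-- The sample `x` labeled by the concept `C`. -/
noncomputable def labeled {Ω : Type*} (C : Set Ω) {m : ℕ} (x : Fin m → Ω) :
    Fin m → Ω × Bool := fun i => (x i, @decide (x i ∈ C) (Classical.propDecidable _))

/-- `L` is PAC for `𝒞` under `μ` to accuracy `ε` with confidence `1 - δ`. -/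
def IsPAC {Ω : Type*} [MeasurableSpace Ω] (μ : Measure Ω) (𝒞 : Set (Set Ω)) (m : ℕ)
    (L : (Fin m → Ω × Bool) → Set Ω) (ε δ : ℝ) : Prop :=
  ∀ C ∈ 𝒞, prodMeas μ m
    {x | ε < (μ (symmDiff (L (labeled C x)) C)).toReal} ≤ ENNReal.ofReal δ

/-- Empirical error of the hypothesis `B` on the labeled sample `s`:
the number of indices where the label of `B` disagrees with the sample label. -/
noncomputable def empErr {Ω : Type*} {m : ℕ} (B : Set Ω) (s : Fin m → Ω × Bool) : ℕ :=
  (Finset.univ.filter fun i =>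
    (@decide ((s i).1 ∈ B) (Classical.propDecidable _)) ≠ (s i).2).card

open scoped Classical in
/-- Number of sample points falling in `D`. -/
noncomputable def cnt {Ω : Type*} (D : Set Ω) {m : ℕ} (x : Fin m → Ω) : ℕ :=
  (Finset.univ.filter fun i => x i ∈ D).card

lemma integral_exp_cnt {Ω : Type*} [MeasurableSpace Ω] (μ : Measure Ω) [IsProbabilityMeasure μ]
    {D : Set Ω} (hD : MeasurableSet D) (t : ℝ) (m : ℕ) :
    ∫ x, Real.exp (t * (cnt D x : ℝ)) ∂(prodMeas μ m)
      = ((Real.exp t - 1) * (μ D).toReal + 1) ^ m := by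
  classical
  letI : MeasureSpace Ω := ⟨μ⟩
  set g : Ω → ℝ := fun ω => (Real.exp t - 1) * D.indicator (fun _ => (1:ℝ)) ω + 1 with hg
  have hgval : ∀ ω, g ω = if ω ∈ D then Real.exp t else 1 := by
    intro ω
    by_cases h : ω ∈ D <;> simp [hg, Set.indicator_of_mem, Set.indicator_of_notMem, h]
  have hgi : Integrable g μ :=
    (((integrable_const (1:ℝ)).indicator hD).const_mul _).add (integrable_const 1)
  have hpt : ∀ x : Fin m → Ω, Real.exp (t * (cnt D x : ℝ)) = ∏ i, g (x i) := by
    intro x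
    have hcnt : (cnt D x : ℝ) = ∑ i : Fin m, (if x i ∈ D then (1:ℝ) else 0) := by
      rw [cnt, Finset.card_filter]; push_cast; rfl
    rw [hcnt, Finset.mul_sum, Real.exp_sum]
    congr 1; ext i
    by_cases h : x i ∈ D <;> simp [hgval, h]
  have hvol : prodMeas μ m = (volume : Measure (Fin m → Ω)) := rfl
  simp_rw [hpt, hvol]
  rw [show (volume : Measure (Fin m → Ω)) = Measure.pi (fun _ => μ) from rfl,
    MeasureTheory.integral_fintype_prod_eq_pow (ι := Fin m) g]
  congr 1
  · rw [hg]
    rw [integral_add (((integrable_const (1:ℝ)).indicator hD).const_mul _) (integrable_const 1)]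
    rw [integral_const_mul, MeasureTheory.integral_indicator_const (1:ℝ) hD]
    simp [mul_comm]
    exact Or.inl rfl
  · simp

lemma integrable_exp_cnt {Ω : Type*} [MeasurableSpace Ω] (μ : Measure Ω) [IsProbabilityMeasure μ]
    {D : Set Ω} (hD : MeasurableSet D) (t : ℝ) (m : ℕ) :
    Integrable (fun x => Real.exp (t * (cnt D x : ℝ))) (prodMeas μ m) := by
  classical
  letI : MeasureSpace Ω := ⟨μ⟩
  have hgi : Integrable (fun ω => if ω ∈ D then Real.exp t else 1) volume := by
    have heq : (fun ω => if ω ∈ D then Real.exp t else 1)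
        = fun ω => (Real.exp t - 1) * D.indicator (fun _ => (1:ℝ)) ω + 1 := by
      funext ω; by_cases h : ω ∈ D <;>
        simp [h, Set.indicator_of_mem, Set.indicator_of_notMem]
    rw [heq]
    exact (((integrable_const (1:ℝ)).indicator hD).const_mul _).add (integrable_const 1)
  have hpt : (fun x : Fin m → Ω => Real.exp (t * (cnt D x : ℝ)))
      = fun x => ∏ i, (if x i ∈ D then Real.exp t else 1) := by
    funext x
    have hcnt : (cnt D x : ℝ) = ∑ i : Fin m, (if x i ∈ D then (1:ℝ) else 0) := by
      rw [cnt, Finset.card_filter]; push_cast; rfl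
    rw [hcnt, Finset.mul_sum, Real.exp_sum]
    congr 1; ext i
    by_cases h : x i ∈ D <;> simp [h]
  rw [show prodMeas μ m = (volume : Measure (Fin m → Ω)) from rfl, hpt]
  exact Integrable.fintype_prod (f := fun _ : Fin m => fun ω => if ω ∈ D then Real.exp t else 1)
    (fun i => hgi)

lemma exp_half_lt : Real.exp (1/2) ≤ 27/16 := by
  nlinarith [Real.exp_one_lt_d9, Real.exp_pos (1/2 : ℝ),
    (by rw [← Real.exp_add]; norm_num : Real.exp (1/2) * Real.exp (1/2) = Real.exp 1)]

lemma exp_neg_tenth3 : Real.exp (-(3/10)) ≤ 119/160 := by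
  have h : (160/119 : ℝ) ≤ Real.exp (3/10) := by
    have := Real.sum_le_exp_of_nonneg (by norm_num : (0:ℝ) ≤ 3/10) 4
    refine le_trans ?_ this
    norm_num [Finset.sum_range_succ, Nat.factorial]
  have h2 : Real.exp (-(3/10)) = (Real.exp (3/10))⁻¹ := by rw [Real.exp_neg]
  rw [h2]
  rw [inv_le_comm₀ (Real.exp_pos _) (by norm_num)]
  linarith [h]

lemma chernoff_up {Ω : Type*} [MeasurableSpace Ω] (μ : Measure Ω) [IsProbabilityMeasure μ]
    {D : Set Ω} (hD : MeasurableSet D) {ε : ℝ} (hε : 0 < ε)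
    (hp : (μ D).toReal ≤ ε / 2) (m : ℕ) :
    (prodMeas μ m {x | 3*ε/4*m ≤ (cnt D x : ℝ)}).toReal ≤ Real.exp (-(ε*m)/32) := by
  haveI : IsProbabilityMeasure (prodMeas μ m) := by
    rw [prodMeas]; infer_instance
  set t : ℝ := 1/2 with ht
  set X : (Fin m → Ω) → ℝ := fun x => (cnt D x : ℝ) with hX
  have h_int : Integrable (fun x => Real.exp (t * X x)) (prodMeas μ m) :=
    integrable_exp_cnt μ hD t m
  have hmgf : ProbabilityTheory.mgf X (prodMeas μ m) t
      = ((Real.exp t - 1) * (μ D).toReal + 1) ^ m := by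
    rw [ProbabilityTheory.mgf]; exact integral_exp_cnt μ hD t m
  have key := ProbabilityTheory.measure_ge_le_exp_mul_mgf (X := X) (μ := prodMeas μ m)
    (3*ε/4*m) (by norm_num) h_int
  rw [hmgf] at key
  refine key.trans ?_
  have hp0 : 0 ≤ (μ D).toReal := ENNReal.toReal_nonneg
  have het : 0 ≤ Real.exp t - 1 := by rw [ht]; nlinarith [Real.add_one_le_exp (1/2 : ℝ)]
  have hbase : 0 ≤ (Real.exp t - 1) * (μ D).toReal + 1 := by nlinarith
  have h1 : (Real.exp t - 1) * (μ D).toReal + 1 ≤ Real.exp ((Real.exp t - 1) * (ε/2)) := by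
    have : (Real.exp t - 1) * (μ D).toReal ≤ (Real.exp t - 1) * (ε/2) :=
      mul_le_mul_of_nonneg_left hp het
    linarith [Real.add_one_le_exp ((Real.exp t - 1) * (ε/2))]
  calc Real.exp (-t * (3*ε/4*m)) * ((Real.exp t - 1) * (μ D).toReal + 1) ^ m
      ≤ Real.exp (-t * (3*ε/4*m)) * Real.exp ((Real.exp t - 1) * (ε/2)) ^ m := by
        apply mul_le_mul_of_nonneg_left (pow_le_pow_left₀ hbase h1 m) (Real.exp_pos _).le
    _ = Real.exp (-t * (3*ε/4*m) + (Real.exp t - 1) * (ε/2) * m) := by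
        rw [← Real.exp_nat_mul, ← Real.exp_add]; ring_nf
    _ ≤ Real.exp (-(ε*m)/32) := by
        apply Real.exp_le_exp.mpr
        have hnum : (Real.exp t - 1)/2 - 3*t/4 + 1/32 ≤ 0 := by
          rw [ht]; have := exp_half_lt; norm_num at this ⊢; linarith
        have hm0 : (0:ℝ) ≤ (m:ℝ) := Nat.cast_nonneg m
        nlinarith [mul_nonneg hε.le hm0]

lemma chernoff_low {Ω : Type*} [MeasurableSpace Ω] (μ : Measure Ω) [IsProbabilityMeasure μ]
    {D : Set Ω} (hD : MeasurableSet D) {ε : ℝ} (hε : 0 < ε)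
    (hp : ε ≤ (μ D).toReal) (m : ℕ) :
    (prodMeas μ m {x | (cnt D x : ℝ) ≤ 3*ε/4*m}).toReal ≤ Real.exp (-(ε*m)/32) := by
  haveI : IsProbabilityMeasure (prodMeas μ m) := by
    rw [prodMeas]; infer_instance
  set t : ℝ := -(3/10) with ht
  set X : (Fin m → Ω) → ℝ := fun x => (cnt D x : ℝ) with hX
  have h_int : Integrable (fun x => Real.exp (t * X x)) (prodMeas μ m) :=
    integrable_exp_cnt μ hD t m
  have hmgf : ProbabilityTheory.mgf X (prodMeas μ m) t
      = ((Real.exp t - 1) * (μ D).toReal + 1) ^ m := by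
    rw [ProbabilityTheory.mgf]; exact integral_exp_cnt μ hD t m
  have key := ProbabilityTheory.measure_le_le_exp_mul_mgf (X := X) (μ := prodMeas μ m)
    (3*ε/4*m) (by norm_num) h_int
  rw [hmgf] at key
  refine key.trans ?_
  have hp0 : 0 ≤ (μ D).toReal := ENNReal.toReal_nonneg
  have hp1 : (μ D).toReal ≤ 1 := by
    simpa using ENNReal.toReal_mono (by norm_num) (prob_le_one (μ := μ) (s := D))
  have het : Real.exp t - 1 ≤ 0 := by
    have : Real.exp t ≤ 1 := Real.exp_le_one_iff.mpr (by norm_num [ht])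
    linarith
  have hbase : 0 ≤ (Real.exp t - 1) * (μ D).toReal + 1 := by
    nlinarith [Real.exp_pos t]
  have h1 : (Real.exp t - 1) * (μ D).toReal + 1 ≤ Real.exp ((Real.exp t - 1) * ε) := by
    have : (Real.exp t - 1) * (μ D).toReal ≤ (Real.exp t - 1) * ε :=
      mul_le_mul_of_nonpos_left hp het
    linarith [Real.add_one_le_exp ((Real.exp t - 1) * ε)]
  calc Real.exp (-t * (3*ε/4*m)) * ((Real.exp t - 1) * (μ D).toReal + 1) ^ m
      ≤ Real.exp (-t * (3*ε/4*m)) * Real.exp ((Real.exp t - 1) * ε) ^ m := by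
        apply mul_le_mul_of_nonneg_left (pow_le_pow_left₀ hbase h1 m) (Real.exp_pos _).le
    _ = Real.exp (-t * (3*ε/4*m) + (Real.exp t - 1) * ε * m) := by
        rw [← Real.exp_nat_mul, ← Real.exp_add]; ring_nf
    _ ≤ Real.exp (-(ε*m)/32) := by
        apply Real.exp_le_exp.mpr
        have hnum : -t * (3/4) + (Real.exp t - 1) + 1/32 ≤ 0 := by
          rw [ht]; have := exp_neg_tenth3; norm_num at this ⊢; linarith
        have hm0 : (0:ℝ) ≤ (m:ℝ) := Nat.cast_nonneg m
        nlinarith [mul_nonneg hε.le hm0]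

lemma empErr_labeled {Ω : Type*} (Bj C : Set Ω) {m : ℕ} (x : Fin m → Ω) :
    empErr Bj (labeled C x) = cnt (symmDiff Bj C) x := by
  classical
  rw [empErr, cnt]
  congr 1
  apply Finset.filter_congr
  intro i _
  show (_ ≠ _) ↔ _
  rw [labeled]
  simp only [ne_eq, decide_eq_decide]
  rw [Set.mem_symmDiff]
  tauto

/-- Benedek–Itai / Vidyasagar, Theorem 6.3: if `B 0, …, B (k-1)` form an
`ε/2`-cover of the concept class `𝒞` in `L¹(μ)`, then any minimal empirical risk rule over
`{B j}` with sample size `m ≥ (32/ε) ln(k/δ)` is PAC to accuracy `ε` with confidence `1 - δ`. -/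
theorem stmt0 {Ω : Type*} [MeasurableSpace Ω] (μ : Measure Ω) [IsProbabilityMeasure μ]
    (𝒞 : Set (Set Ω)) (h𝒞 : ∀ C ∈ 𝒞, MeasurableSet C)
    (ε : ℝ) (hε : 0 < ε) (k : ℕ) (B : Fin k → Set Ω) (hBmeas : ∀ j, MeasurableSet (B j))
    (hcover : ∀ C ∈ 𝒞, ∃ j, μ (symmDiff C (B j)) ≤ ENNReal.ofReal (ε / 2)) :
    ∀ δ : ℝ, 0 < δ → δ < 1 → ∀ m : ℕ, (32 / ε) * Real.log (k / δ) ≤ m →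
      ∀ L : (Fin m → Ω × Bool) → Set Ω,
        (∀ s : Fin m → Ω × Bool, ∃ j : Fin k, L s = B j ∧
          ∀ j' : Fin k, empErr (B j) s ≤ empErr (B j') s) →
        IsPAC μ 𝒞 m L ε δ := by
  classical
  intro δ hδ0 hδ1 m hm L hL C hC
  haveI : IsProbabilityMeasure (prodMeas μ m) := by rw [prodMeas]; infer_instance
  obtain ⟨js, hjs⟩ := hcover C hC
  have hkpos : 0 < k := js.pos
  have hDmeas : ∀ j, MeasurableSet (symmDiff (B j) C) := fun j =>
    (hBmeas j).symmDiff (h𝒞 C hC)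
  have hpjs : (μ (symmDiff (B js) C)).toReal ≤ ε / 2 := by
    have h : μ (symmDiff (B js) C) ≤ ENNReal.ofReal (ε/2) := by
      rw [symmDiff_comm]; exact hjs
    exact ENNReal.toReal_le_of_le_ofReal (by linarith) h
  set E1 : Set (Fin m → Ω) := {x | 3*ε/4*m ≤ (cnt (symmDiff (B js) C) x : ℝ)} with hE1
  set E2 : Fin k → Set (Fin m → Ω) :=
    fun j => {x | (cnt (symmDiff (B j) C) x : ℝ) ≤ 3*ε/4*m} with hE2
  set J : Finset (Fin k) :=
    Finset.univ.filter (fun j => ε < (μ (symmDiff (B j) C)).toReal) with hJ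
  have hsub : {x | ε < (μ (symmDiff (L (labeled C x)) C)).toReal} ⊆ E1 ∪ ⋃ j ∈ J, E2 j := by
    intro x hx
    obtain ⟨j, hLj, hmin⟩ := hL (labeled C x)
    rw [Set.mem_setOf_eq, hLj] at hx
    by_cases hxE1 : x ∈ E1
    · exact Set.mem_union_left _ hxE1
    · refine Set.mem_union_right _ (Set.mem_iUnion₂.mpr ⟨j, ?_, ?_⟩)
      · rw [hJ]; exact Finset.mem_filter.mpr ⟨Finset.mem_univ _, hx⟩
      · show (cnt (symmDiff (B j) C) x : ℝ) ≤ 3*ε/4*m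
        have h1 : cnt (symmDiff (B j) C) x ≤ cnt (symmDiff (B js) C) x := by
          rw [← empErr_labeled, ← empErr_labeled]; exact hmin js
        have h2 : (cnt (symmDiff (B js) C) x : ℝ) < 3*ε/4*m := by
          have := hxE1
          rw [hE1, Set.mem_setOf_eq] at this
          linarith [lt_of_not_ge this]
        calc ((cnt (symmDiff (B j) C) x : ℕ) : ℝ)
            ≤ ((cnt (symmDiff (B js) C) x : ℕ) : ℝ) := Nat.cast_le.mpr h1
          _ ≤ 3*ε/4*m := h2.le
  have hc : ∀ S : Set (Fin m → Ω), (prodMeas μ m S).toReal ≤ Real.exp (-(ε*m)/32) →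
      prodMeas μ m S ≤ ENNReal.ofReal (Real.exp (-(ε*m)/32)) := by
    intro S h
    rw [← ENNReal.ofReal_toReal (measure_ne_top (prodMeas μ m) S)]
    exact ENNReal.ofReal_le_ofReal h
  have hE1b : prodMeas μ m E1 ≤ ENNReal.ofReal (Real.exp (-(ε*m)/32)) :=
    hc _ (chernoff_up μ (hDmeas js) hε hpjs m)
  have hE2b : ∀ j ∈ J, prodMeas μ m (E2 j) ≤ ENNReal.ofReal (Real.exp (-(ε*m)/32)) := by
    intro j hj
    refine hc _ (chernoff_low μ (hDmeas j) hε ?_ m)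
    rw [hJ] at hj
    exact (Finset.mem_filter.mp hj).2.le
  have hJcard : J.card + 1 ≤ k := by
    have hjsJ : js ∉ J := by
      rw [hJ]
      simp only [Finset.mem_filter, Finset.mem_univ, true_and, not_lt]
      linarith
    have hsubJ : J ⊆ Finset.univ.erase js := fun j hj =>
      Finset.mem_erase.mpr ⟨fun h => hjsJ (h ▸ hj), Finset.mem_univ _⟩
    have := Finset.card_le_card hsubJ
    rw [Finset.card_erase_of_mem (Finset.mem_univ _), Finset.card_univ, Fintype.card_fin] at this
    omega
  have hkexp : (k : ℝ) * Real.exp (-(ε*m)/32) ≤ δ := by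
    have hk0 : (0:ℝ) < (k:ℝ) := by exact_mod_cast hkpos
    have hlog : Real.log ((k:ℝ)/δ) ≤ ε*m/32 := by
      have h32 : (0:ℝ) < ε/32 := by linarith
      have := mul_le_mul_of_nonneg_left hm h32.le
      have heq : ε/32 * (32/ε * Real.log ((k:ℝ)/δ)) = Real.log ((k:ℝ)/δ) := by
        field_simp
      rw [heq] at this
      calc Real.log ((k:ℝ)/δ) ≤ ε/32 * (m:ℝ) := this
        _ = ε*m/32 := by ring
    have h1 : (k:ℝ)/δ ≤ Real.exp (ε*m/32) := by
      rw [← Real.exp_log (div_pos hk0 hδ0)]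
      exact Real.exp_le_exp.mpr hlog
    have h2 : (k:ℝ) ≤ Real.exp (ε*m/32) * δ := by
      rwa [div_le_iff₀ hδ0] at h1
    have hE : (0:ℝ) < Real.exp (ε*m/32) := Real.exp_pos _
    have h3 : Real.exp (-(ε*m)/32) = (Real.exp (ε*m/32))⁻¹ := by
      rw [← Real.exp_neg]; ring_nf
    rw [h3]
    rw [mul_inv_le_iff₀ hE]
    linarith
  calc prodMeas μ m {x | ε < (μ (symmDiff (L (labeled C x)) C)).toReal}
      ≤ prodMeas μ m (E1 ∪ ⋃ j ∈ J, E2 j) := measure_mono hsub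
    _ ≤ prodMeas μ m E1 + prodMeas μ m (⋃ j ∈ J, E2 j) := measure_union_le _ _
    _ ≤ ENNReal.ofReal (Real.exp (-(ε*m)/32)) + ∑ j ∈ J, prodMeas μ m (E2 j) :=
        add_le_add hE1b (measure_biUnion_finset_le J E2)
    _ ≤ ENNReal.ofReal (Real.exp (-(ε*m)/32))
        + ∑ _j ∈ J, ENNReal.ofReal (Real.exp (-(ε*m)/32)) :=
        add_le_add le_rfl (Finset.sum_le_sum hE2b)
    _ = ((J.card + 1 : ℕ) : ENNReal) * ENNReal.ofReal (Real.exp (-(ε*m)/32)) := by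
        rw [Finset.sum_const, nsmul_eq_mul]
        push_cast
        ring
    _ ≤ ((k : ℕ) : ENNReal) * ENNReal.ofReal (Real.exp (-(ε*m)/32)) := by
        apply mul_le_mul_left
        exact_mod_cast hJcard
    _ = ENNReal.ofReal ((k:ℝ) * Real.exp (-(ε*m)/32)) := by
        rw [ENNReal.ofReal_mul (by positivity)]
        congr 1
        exact (ENNReal.ofReal_natCast k).symm
    _ ≤ ENNReal.ofReal δ := ENNReal.ofReal_le_ofReal hkexp
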